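/- Let F_{d+1} be the Fourier matrix of order d+1 and define, for z ∈ ℂ^d, the Lagrange polynomial values (ℓ_1(z); …; ℓ_{d+1}(z)) := (1/(d+1)) · F_{d+1}^* · (1; z) ∈ ℂ^{d+1}. Then for every z ∈ ℂ^d, Σ_{i=1}^{d+1} |ℓ_i(z)|² = (1 + ‖z‖₂²)/(d+1); in particular Σ_{i=1}^{d+1} |ℓ_i(z)|² ≤ 1 for all z in the torus 𝕋^d = {z ∈ ℂ^d : |z_j| = 1 for all j}, so the d+1 points obtained from the rows of F_{d+1} with first coordinate deleted form a Fejér set for 𝕋^d. -/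

import Mathlib

open Matrix

/-- The Fourier matrix `F_n = [ω^{jk}]_{1 ≤ j,k ≤ n}` of order `n`, where `ω = exp(2πi/n)`. -/
noncomputable def fourierMatrix (n : ℕ) : Matrix (Fin n) (Fin n) ℂ :=
  Matrix.of fun j k : Fin n =>
    Complex.exp (2 * Real.pi * Complex.I * (((j : ℕ) : ℂ) + 1) * (((k : ℕ) : ℂ) + 1) / n)

/-- The values at `z ∈ ℂ^d` of the degree-one fundamental Lagrange polynomials associated to
the `d+1` points of the torus obtained by deleting the first column of the Fourier matrix
`F_{d+1}`:  `(ℓ_1(z); …; ℓ_{d+1}(z)) = (1/(d+1)) F_{d+1}^* (1; z)`. -/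
noncomputable def torusLagrange (d : ℕ) (z : Fin d → ℂ) (i : Fin (d + 1)) : ℂ :=
  (((d : ℂ) + 1)⁻¹) * ((fourierMatrix (d + 1))ᴴ *ᵥ (Fin.cons 1 z : Fin (d + 1) → ℂ)) i

lemma fourier_mul_conjTranspose (n : ℕ) (hn : 0 < n) :
    fourierMatrix n * (fourierMatrix n)ᴴ = (n : ℂ) • 1 := by
  ext j l
  simp only [Matrix.mul_apply, Matrix.conjTranspose_apply, fourierMatrix, Matrix.of_apply,
    Matrix.smul_apply, Matrix.one_apply, smul_eq_mul, Complex.star_def]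
  set c : ℂ := Complex.exp (2 * Real.pi * Complex.I * (((j:ℕ):ℂ) - ((l:ℕ):ℂ)) / n) with hc
  have hterm : ∀ k : Fin n,
      Complex.exp (2 * Real.pi * Complex.I * (((j:ℕ):ℂ)+1) * (((k:ℕ):ℂ)+1) / n) *
        (starRingEnd ℂ) (Complex.exp (2 * Real.pi * Complex.I * (((l:ℕ):ℂ)+1) * (((k:ℕ):ℂ)+1) / n)) =
      c ^ ((k:ℕ)+1) := by
    intro k
    rw [← Complex.exp_conj, ← Complex.exp_add, hc, ← Complex.exp_nat_mul]
    congr 1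
    have hconj : (starRingEnd ℂ) (2 * Real.pi * Complex.I * (((l:ℕ):ℂ)+1) * (((k:ℕ):ℂ)+1) / n) =
        -(2 * Real.pi * Complex.I * (((l:ℕ):ℂ)+1) * (((k:ℕ):ℂ)+1) / n) := by
      simp [map_div₀, Complex.conj_I, map_ofNat]
      ring
    rw [hconj]
    push_cast
    ring
  rw [Finset.sum_congr rfl fun k _ => hterm k]
  by_cases hjl : j = l
  · subst hjl
    have : c = 1 := by rw [hc]; simp
    simp [this, Finset.card_univ]
  · have hne : ((j:ℕ):ℂ) ≠ ((l:ℕ):ℂ) := by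
      simp only [ne_eq, Nat.cast_inj]
      exact fun h => hjl (Fin.ext h)
    have hc1 : c ≠ 1 := by
      rw [hc]
      intro h
      rw [Complex.exp_eq_one_iff] at h
      obtain ⟨m, hm⟩ := h
      have hn' : (n:ℂ) ≠ 0 := Nat.cast_ne_zero.mpr hn.ne'
      have h2 : (2:ℂ) * Real.pi * Complex.I ≠ 0 := by
        simp [Complex.I_ne_zero, Real.pi_ne_zero, Complex.ofReal_ne_zero]
      field_simp at hm
      have h3 : 2 * (Real.pi:ℂ) * Complex.I * (((j:ℕ):ℂ) - ((l:ℕ):ℂ)) =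
          2 * (Real.pi:ℂ) * Complex.I * ((m:ℂ) * (n:ℂ)) := by linear_combination (2 * (Real.pi:ℂ) * Complex.I) * hm
      have h4 := mul_left_cancel₀ h2 h3
      have hint : ((j:ℕ):ℤ) - ((l:ℕ):ℤ) = m * n := by exact_mod_cast h4
      have hjlt : ((j:ℕ):ℤ) < n := by exact_mod_cast j.isLt
      have hllt : ((l:ℕ):ℤ) < n := by exact_mod_cast l.isLt
      have hj0 : (0:ℤ) ≤ (j:ℕ) := Int.natCast_nonneg _
      have hl0 : (0:ℤ) ≤ (l:ℕ) := Int.natCast_nonneg _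
      have hm0 : m = 0 := by
        by_contra hm0
        rcases lt_or_gt_of_ne hm0 with h | h
        · have : m * n ≤ -n := by
            have : m ≤ -1 := by omega
            nlinarith [Int.natCast_nonneg n]
          omega
        · have : (n:ℤ) ≤ m * n := by nlinarith [Int.natCast_pos.mpr hn]
          omega
      rw [hm0] at hint
      have : (j:ℕ) = (l:ℕ) := by omega
      exact hjl (Fin.ext this)
    have hcn : c ^ n = 1 := by
      rw [hc, ← Complex.exp_nat_mul]
      have hn' : (n:ℂ) ≠ 0 := Nat.cast_ne_zero.mpr hn.ne'
      have : (n:ℂ) * (2 * Real.pi * Complex.I * (((j:ℕ):ℂ) - ((l:ℕ):ℂ)) / n) =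
          (((((j:ℕ):ℤ) - ((l:ℕ):ℤ)) : ℤ) : ℂ) * (2 * Real.pi * Complex.I) := by
        push_cast
        field_simp
      rw [this, Complex.exp_int_mul_two_pi_mul_I]
    have hsum : ∑ k : Fin n, c ^ ((k:ℕ)+1) = c * ∑ k ∈ Finset.range n, c ^ k := by
      rw [Finset.mul_sum, Fin.sum_univ_eq_sum_range (fun k => c ^ (k+1))]
      exact Finset.sum_congr rfl fun k _ => by rw [pow_succ, mul_comm]
    rw [hsum, geom_sum_eq hc1, hcn]
    simp [hjl]

/-- for every `z ∈ ℂ^d`, the degree-one Lagrange polynomials for the Fourier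
points satisfy `∑ᵢ |ℓᵢ(z)|² = (1 + ‖z‖₂²)/(d+1)`; in particular `∑ᵢ |ℓᵢ(z)|² ≤ 1` for all
`z` in the torus `𝕋^d`, so the `d+1` points obtained from the rows of `F_{d+1}` with first
coordinate deleted form a Fejér set for `𝕋^d`. -/
theorem fourier_fejer (d : ℕ) (hd : 1 ≤ d) (z : Fin d → ℂ) :
    ∑ i : Fin (d + 1), ‖torusLagrange d z i‖ ^ 2 =
      (1 + ∑ k : Fin d, ‖z k‖ ^ 2) / ((d : ℝ) + 1) ∧
    ((∀ k, ‖z k‖ = 1) →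
      ∑ i : Fin (d + 1), ‖torusLagrange d z i‖ ^ 2 ≤ 1) := by
  set v : Fin (d+1) → ℂ := Fin.cons 1 z with hv
  set w : Fin (d+1) → ℂ := (fourierMatrix (d+1))ᴴ *ᵥ v with hw
  have habs : ∀ (m : ℕ) (u : Fin m → ℂ),
      star u ⬝ᵥ u = ((∑ i, ‖u i‖ ^ 2 : ℝ) : ℂ) := by
    intro m u
    simp only [dotProduct, Pi.star_apply, Complex.star_def, Complex.ofReal_sum]
    refine Finset.sum_congr rfl fun i _ => ?_
    rw [mul_comm, Complex.mul_conj',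
      Complex.ofReal_pow]
  have key : star w ⬝ᵥ w = ((d:ℂ)+1) * (star v ⬝ᵥ v) := by
    rw [hw, Matrix.star_mulVec, Matrix.conjTranspose_conjTranspose,
      Matrix.dotProduct_mulVec, Matrix.vecMul_vecMul,
      fourier_mul_conjTranspose (d+1) (Nat.succ_pos d)]
    have hsm : star v ᵥ* ((((d+1:ℕ)):ℂ) • (1 : Matrix (Fin (d+1)) (Fin (d+1)) ℂ)) =
        ((d+1:ℕ):ℂ) • star v := by
      ext i
      simp [Matrix.vecMul, dotProduct, Matrix.smul_apply, Matrix.one_apply, mul_ite,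
        mul_comm]
    rw [hsm, smul_dotProduct, smul_eq_mul]
    push_cast
    ring
  have keyR : (∑ i, ‖w i‖ ^ 2 : ℝ) =
      ((d:ℝ)+1) * (1 + ∑ k, ‖z k‖ ^ 2) := by
    have h1 := key
    rw [habs, habs] at h1
    have hvsum : (∑ i, ‖v i‖ ^ 2 : ℝ) = 1 + ∑ k, ‖z k‖ ^ 2 := by
      rw [hv, Fin.sum_univ_succ]
      simp
    rw [hvsum] at h1
    have : (((∑ i, ‖w i‖ ^ 2 : ℝ)) : ℂ) =
        ((((d:ℝ)+1) * (1 + ∑ k, ‖z k‖ ^ 2) : ℝ) : ℂ) := by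
      rw [h1]; push_cast; ring
    exact_mod_cast this
  have hdpos : (0:ℝ) < (d:ℝ) + 1 := by positivity
  have hmain : ∑ i : Fin (d + 1), ‖torusLagrange d z i‖ ^ 2 =
      (1 + ∑ k : Fin d, ‖z k‖ ^ 2) / ((d : ℝ) + 1) := by
    have hL : ∀ i, ‖torusLagrange d z i‖ ^ 2 =
        (((d:ℝ)+1)⁻¹) ^ 2 * ‖w i‖ ^ 2 := by
      intro i
      rw [torusLagrange, norm_mul, mul_pow, norm_inv]
      congr 2
      rw [show ((d:ℂ)+1) = ((d+1:ℕ):ℂ) by push_cast; ring, Complex.norm_natCast]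
      push_cast; ring
    rw [Finset.sum_congr rfl fun i _ => hL i, ← Finset.mul_sum, keyR]
    field_simp
  refine ⟨hmain, fun hz => ?_⟩
  rw [hmain]
  have : (∑ k : Fin d, ‖z k‖ ^ 2 : ℝ) = d := by
    simp [hz]
  rw [this]
  rw [div_le_one hdpos]
  linarith
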